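/- Let q ≥ 2 be an integer, let n_1, ..., n_q be non-negative integers with total n = ∑_k n_k > 0, and suppose no single n_k equals n (i.e., at least two of the n_k are positive). Define h(α) = -∑_{ℓ=0}^{n-1} log(ℓ + α) + ∑_{k=1}^{q} ∑_{ℓ=0}^{n_k - 1} log(ℓ·q + α). Then h is strictly concave on the interval (0, 1]; that is, its second derivative h''(α) = ∑_{ℓ=0}^{n-1} 1/(ℓ+α)² - ∑_{k=1}^{q} ∑_{ℓ=0}^{n_k-1} 1/(ℓq+α)² is negative for all 0 < α ≤ 1. -/

import Mathlib

theorem stmt_5 (q : ℕ) (hq : 2 ≤ q) (n : ℕ → ℕ)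
    (hN : 0 < ∑ k ∈ Finset.range q, n k)
    (hne : ∀ k ∈ Finset.range q, n k ≠ ∑ l ∈ Finset.range q, n l) :
    ∀ α : ℝ, 0 < α → α ≤ 1 →
      (∑ ℓ ∈ Finset.range (∑ k ∈ Finset.range q, n k), 1 / ((ℓ : ℝ) + α) ^ 2) -
        ∑ k ∈ Finset.range q, ∑ ℓ ∈ Finset.range (n k), 1 / ((ℓ : ℝ) * q + α) ^ 2
      < 0 := by
  intro α hα hα1
  set N := ∑ k ∈ Finset.range q, n k with hNdef
  -- two distinct indices with positive n
  obtain ⟨k1, hk1mem, hk1⟩ : ∃ k ∈ Finset.range q, n k ≠ 0 :=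
    Finset.exists_ne_zero_of_sum_ne_zero hN.ne'
  have hsplit : n k1 + ∑ k ∈ (Finset.range q).erase k1, n k = N :=
    Finset.add_sum_erase _ _ hk1mem
  have herase : ∑ k ∈ (Finset.range q).erase k1, n k ≠ 0 := by
    intro h
    exact hne k1 hk1mem (by omega)
  obtain ⟨k2, hk2mem, hk2⟩ : ∃ k ∈ (Finset.range q).erase k1, n k ≠ 0 :=
    Finset.exists_ne_zero_of_sum_ne_zero herase
  have hk2ne : k2 ≠ k1 := Finset.ne_of_mem_erase hk2mem
  have hk2mem' : k2 ∈ Finset.range q := Finset.mem_of_mem_erase hk2mem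
  have hαsq : 0 < α ^ 2 := by positivity
  -- telescoping bound for the tail of the left sum
  have tail : ∀ m : ℕ, ∑ ℓ ∈ Finset.range m, 1 / (((ℓ : ℝ) + 1) + α) ^ 2
      ≤ 1 / α - 1 / ((m : ℝ) + α) := by
    intro m
    induction m with
    | zero => simp
    | succ m ih =>
      rw [Finset.sum_range_succ]
      have h1 : (0:ℝ) < (m : ℝ) + α := by positivity
      have h2 : (0:ℝ) < (m : ℝ) + 1 + α := by positivity
      have key : 1 / (((m : ℝ) + 1) + α) ^ 2 ≤ 1 / ((m : ℝ) + α) - 1 / (((m : ℝ) + 1) + α) := by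
        rw [div_sub_div _ _ h1.ne' h2.ne', div_le_div_iff₀ (by positivity) (by positivity)]
        ring_nf
        nlinarith
      push_cast
      linarith
  -- left sum bound
  obtain ⟨m, hm⟩ : ∃ m, N = m + 1 := ⟨N - 1, by omega⟩
  have left_lt : ∑ ℓ ∈ Finset.range N, 1 / ((ℓ : ℝ) + α) ^ 2 < 2 / α ^ 2 := by
    rw [hm, Finset.sum_range_succ']
    have h0 : (1:ℝ) / ((0:ℕ) + α) ^ 2 = 1 / α ^ 2 := by norm_num
    have htail := tail m
    have hcast : ∑ ℓ ∈ Finset.range m, 1 / ((↑(ℓ + 1) : ℝ) + α) ^ 2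
        = ∑ ℓ ∈ Finset.range m, 1 / (((ℓ : ℝ) + 1) + α) ^ 2 := by
      apply Finset.sum_congr rfl; intro ℓ _; push_cast; ring_nf
    have hinv : 1 / α ≤ 1 / α ^ 2 := by
      rw [div_le_div_iff₀ hα hαsq]
      nlinarith
    have hmpos : (0:ℝ) < 1 / ((m : ℝ) + α) := by positivity
    rw [hcast, h0]
    have : ∑ ℓ ∈ Finset.range m, 1 / (((ℓ : ℝ) + 1) + α) ^ 2 < 1 / α ^ 2 := by
      calc _ ≤ 1 / α - 1 / ((m : ℝ) + α) := htail
        _ < 1 / α := by linarith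
        _ ≤ 1 / α ^ 2 := hinv
    have h2a : 2 / α ^ 2 = 1 / α ^ 2 + 1 / α ^ 2 := by ring
    linarith [this]
  -- right sum bound
  have term_nonneg : ∀ k, ∀ ℓ ∈ Finset.range (n k), (0:ℝ) ≤ 1 / ((ℓ : ℝ) * q + α) ^ 2 := by
    intro k ℓ _
    have : (0:ℝ) ≤ (ℓ : ℝ) * q := by positivity
    positivity
  have inner_ge : ∀ k, n k ≠ 0 →
      1 / α ^ 2 ≤ ∑ ℓ ∈ Finset.range (n k), 1 / ((ℓ : ℝ) * q + α) ^ 2 := by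
    intro k hk
    have h0 : 0 ∈ Finset.range (n k) := Finset.mem_range.mpr (Nat.pos_of_ne_zero hk)
    have := Finset.single_le_sum (term_nonneg k) h0
    simpa using this
  have inner_nonneg : ∀ k, (0:ℝ) ≤ ∑ ℓ ∈ Finset.range (n k), 1 / ((ℓ : ℝ) * q + α) ^ 2 :=
    fun k => Finset.sum_nonneg (term_nonneg k)
  have right_ge : 2 / α ^ 2 ≤
      ∑ k ∈ Finset.range q, ∑ ℓ ∈ Finset.range (n k), 1 / ((ℓ : ℝ) * q + α) ^ 2 := by
    have hsub : ({k1, k2} : Finset ℕ) ⊆ Finset.range q := by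
      intro x hx
      simp only [Finset.mem_insert, Finset.mem_singleton] at hx
      rcases hx with rfl | rfl
      · exact hk1mem
      · exact hk2mem'
    have hpair : ∑ k ∈ ({k1, k2} : Finset ℕ),
        ∑ ℓ ∈ Finset.range (n k), 1 / ((ℓ : ℝ) * q + α) ^ 2
        = (∑ ℓ ∈ Finset.range (n k1), 1 / ((ℓ : ℝ) * q + α) ^ 2)
          + ∑ ℓ ∈ Finset.range (n k2), 1 / ((ℓ : ℝ) * q + α) ^ 2 :=
      Finset.sum_pair hk2ne.symm
    have hle := Finset.sum_le_sum_of_subset_of_nonneg hsub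
      (fun i _ _ => inner_nonneg i)
    have h1 := inner_ge k1 hk1
    have h2 := inner_ge k2 hk2
    rw [hpair] at hle
    have : 2 / α ^ 2 = 1 / α ^ 2 + 1 / α ^ 2 := by ring
    linarith
  linarith
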